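/- Let W be a real Hilbert space, 0 < α ≤ C_M, C_R > 0, M : W →L[ℝ] W self-adjoint with α‖φ‖² ≤ ⟪M φ, φ⟫ ≤ C_M‖φ‖², R : W →L[ℝ] W with ‖R‖ ≤ C_R and ⟪R φ, φ⟫ ≥ 0 for all φ ∈ W, and V ⊆ W a closed subspace. Let e_i, e_j ∈ W, let w_i, w_j ∈ V satisfy ⟪M(e_k + w_k), v⟫ = 0 for all v ∈ V (k ∈ {i, j}), and let g_j ∈ V satisfy ⟪M g_j + R(e_j + w_j), v⟫ = 0 for all v ∈ V. Let S : V →L[ℝ] V be a continuous linear operator satisfying ⟪M(S φ), ψ⟫ = ⟪R φ, ψ⟫ for all φ, ψ ∈ V. Then for every t ≥ 0: |⟪R(exp(-t S) g_j), e_i + w_i⟫| ≤ 4 (C_R / α)² C_M ‖e_j‖ ‖e_i‖. -/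

import Mathlib

open RealInnerProductSpace NormedSpace

set_option synthInstance.maxHeartbeats 1000000
set_option maxHeartbeats 1000000

/-- Energy decay along the semigroup `exp (-t S)`:  if the damping form is
nonnegative, the `M`-energy at time `t ≥ 0` is at most the initial energy. -/
lemma exp_energy_decay {W X : Type*} [NormedAddCommGroup W] [InnerProductSpace ℝ W]
    [NormedAddCommGroup X] [NormedSpace ℝ X] [CompleteSpace X]
    (M R : W →L[ℝ] W) (hMsa : ∀ φ ψ : W, ⟪M φ, ψ⟫ = ⟪φ, M ψ⟫)
    (hRpos : ∀ φ : W, 0 ≤ ⟪R φ, φ⟫)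
    (J : X →L[ℝ] W) (S : X →L[ℝ] X)
    (hS : ∀ φ : X, ⟪M (J (S φ)), J φ⟫ = ⟪R (J φ), J φ⟫)
    (g : X) (t : ℝ) (ht : 0 ≤ t) :
    ⟪M (J (∑' n : ℕ, (((-t) ^ n / n.factorial : ℝ) • ((S ^ n) g)))),
      J (∑' n : ℕ, (((-t) ^ n / n.factorial : ℝ) • ((S ^ n) g)))⟫ ≤ ⟪M (J g), J g⟫ := by
  set u : ℝ → X := fun s => exp (s • (-S)) g with hu
  have huval : ∀ s : ℝ, (∑' n : ℕ, (((-s) ^ n / n.factorial : ℝ) • ((S ^ n) g))) = u s := by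
    intro s
    have h1 : s • (-S) = (-s) • S := by rw [neg_smul, smul_neg]
    have h2 := (ContinuousLinearMap.apply ℝ X g).map_tsum
      (expSeries_summable' (𝕂 := ℝ) ((-s) • S))
    simp only [hu, h1, exp_eq_tsum ℝ]
    rw [show (∑' n : ℕ, ((n.factorial : ℝ))⁻¹ • ((-s) • S) ^ n) g
        = (ContinuousLinearMap.apply ℝ X g) (∑' n : ℕ, ((n.factorial : ℝ))⁻¹ • ((-s) • S) ^ n)
        from rfl, h2]
    refine tsum_congr fun n => ?_
    rw [ContinuousLinearMap.apply_apply, smul_pow]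
    simp [ContinuousLinearMap.smul_apply, smul_smul, div_eq_mul_inv, mul_comm]
  have hderiv : ∀ s : ℝ, HasDerivAt u (-(S (u s))) s := by
    intro s
    have h1 := hasDerivAt_exp_smul_const' (𝕂 := ℝ) (-S) s
    have h2 := h1.clm_apply (hasDerivAt_const s g)
    simp only [map_zero, add_zero] at h2
    have h3 : ((-S) * exp (s • -S)) g = -(S (u s)) := by
      simp only [hu, ContinuousLinearMap.mul_apply, ContinuousLinearMap.neg_apply,
        neg_inj]
    rwa [h3] at h2
  set E : ℝ → ℝ := fun s => ⟪M (J (u s)), J (u s)⟫ with hE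
  have hEderiv : ∀ s : ℝ, HasDerivAt E (-(2 * ⟪R (J (u s)), J (u s)⟫)) s := by
    intro s
    have hx : HasDerivAt (fun r => J (u r)) (J (-(S (u s)))) s :=
      J.hasFDerivAt.comp_hasDerivAt s (hderiv s)
    have hMx : HasDerivAt (fun r => M (J (u r))) (M (J (-(S (u s))))) s :=
      M.hasFDerivAt.comp_hasDerivAt s hx
    have h := hMx.inner (𝕜 := ℝ) hx
    have e1 : ⟪M (J (u s)), J (-(S (u s)))⟫ = -⟪R (J (u s)), J (u s)⟫ := by
      rw [map_neg, inner_neg_right, hMsa, real_inner_comm, hS]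
    have e2 : ⟪M (J (-(S (u s)))), J (u s)⟫ = -⟪R (J (u s)), J (u s)⟫ := by
      rw [map_neg, map_neg, inner_neg_left, hS]
    rw [hE]
    refine h.congr_deriv ?_
    rw [e1, e2]; ring
  have hdiff : Differentiable ℝ E := fun s => (hEderiv s).differentiableAt
  have hnonpos : ∀ s, deriv E s ≤ 0 := by
    intro s
    rw [(hEderiv s).deriv]
    have := hRpos (J (u s))
    linarith
  have hmono := antitone_of_deriv_nonpos hdiff hnonpos
  have hE0 : E 0 = ⟪M (J g), J g⟫ := by
    have : u 0 = g := by simp [hu, exp_zero]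
    simp [hE, this]
  have hfin := hmono ht
  rw [hE0] at hfin
  calc ⟪M (J (∑' n : ℕ, (((-t) ^ n / n.factorial : ℝ) • ((S ^ n) g)))),
      J (∑' n : ℕ, (((-t) ^ n / n.factorial : ℝ) • ((S ^ n) g)))⟫
      = E t := by rw [huval t]
    _ ≤ ⟪M (J g), J g⟫ := hfin

private lemma sq_le_of_sq {a b : ℝ} (_ha : 0 ≤ a) (hb : 0 ≤ b) (h : a ^ 2 ≤ b ^ 2) :
    a ≤ b := by nlinarith

/-- The entry bound `|G⁰(t)_{i,j}| ≤ 4 (C_R/α)² C_M ‖e_j‖‖e_i‖` for the effective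
convolution kernel.  Here `∑' n, ((-t)ⁿ/n!) • (Sⁿ g_j)` is the power-series
exponential `exp (-t S)` of the bounded operator `S` applied to `g_j`. -/
theorem effective_convolution_kernel_entry_bound
    {W : Type*} [NormedAddCommGroup W] [InnerProductSpace ℝ W] [CompleteSpace W]
    (α C_M C_R : ℝ) (hα : 0 < α) (hαC : α ≤ C_M) (hCR : 0 < C_R)
    (M : W →L[ℝ] W) (hMsa : ∀ φ ψ : W, ⟪M φ, ψ⟫ = ⟪φ, M ψ⟫)
    (hMl : ∀ φ : W, α * ‖φ‖ ^ 2 ≤ ⟪M φ, φ⟫)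
    (hMu : ∀ φ : W, ⟪M φ, φ⟫ ≤ C_M * ‖φ‖ ^ 2)
    (R : W →L[ℝ] W) (hR : ‖R‖ ≤ C_R) (hRpos : ∀ φ : W, 0 ≤ ⟪R φ, φ⟫)
    (V : Submodule ℝ W) (hV : IsClosed (V : Set W))
    (e_i e_j w_i w_j : W) (hwiV : w_i ∈ V) (hwjV : w_j ∈ V)
    (hwi : ∀ v ∈ V, ⟪M (e_i + w_i), v⟫ = 0)
    (hwj : ∀ v ∈ V, ⟪M (e_j + w_j), v⟫ = 0)
    (g_j : V) (hg : ∀ v ∈ V, ⟪M (g_j : W) + R (e_j + w_j), v⟫ = 0)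
    (S : V →L[ℝ] V)
    (hS : ∀ φ ψ : V, ⟪M (S φ : W), (ψ : W)⟫ = ⟪R (φ : W), (ψ : W)⟫)
    (t : ℝ) (ht : 0 ≤ t) :
    |⟪R (((∑' n : ℕ, (((-t) ^ n / n.factorial : ℝ) • ((S ^ n) g_j)) : V) : W)),
        e_i + w_i⟫| ≤ 4 * (C_R / α) ^ 2 * C_M * ‖e_j‖ * ‖e_i‖ := by
  haveI : CompleteSpace V := hV.completeSpace_coe
  have hCM : 0 < C_M := lt_of_lt_of_le hα hαC
  -- Cauchy–Schwarz for the symmetric positive form ⟪M ·, ·⟫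
  have bCS : ∀ x y : W, ⟪M x, y⟫ ^ 2 ≤ ⟪M x, x⟫ * ⟪M y, y⟫ := by
    intro x y
    by_cases hy : y = 0
    · simp [hy]
    · have hny : 0 < ‖y‖ := norm_pos_iff.2 hy
      have hr : 0 < ⟪M y, y⟫ := lt_of_lt_of_le (by positivity) (hMl y)
      set q := ⟪M x, y⟫ with hq
      set r := ⟪M y, y⟫ with hrdef
      set p := ⟪M x, x⟫ with hp
      have hyx : ⟪M y, x⟫ = q := by rw [hMsa, real_inner_comm]
      have hexp : ⟪M (x + (-q/r) • y), x + (-q/r) • y⟫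
          = p + 2*(-q/r)*q + (-q/r)^2 * r := by
        simp only [map_add, map_smul, inner_add_left, inner_add_right,
          real_inner_smul_left, real_inner_smul_right, ContinuousLinearMap.coe_smul',
          Pi.smul_apply, smul_eq_mul, hyx, ← hq, ← hrdef, ← hp]
        ring
      have h0 : 0 ≤ ⟪M (x + (-q/r) • y), x + (-q/r) • y⟫ :=
        le_trans (by positivity) (hMl _)
      rw [hexp] at h0
      have h1 : 0 ≤ (p + 2*(-q/r)*q + (-q/r)^2 * r) * r := mul_nonneg h0 hr.le
      have h2 : (p + 2*(-q/r)*q + (-q/r)^2 * r) * r = p * r - q^2 := by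
        field_simp
        ring
      rw [h2] at h1
      linarith
  -- bound on the inner product against R
  have hRMle : ∀ x y : W, |⟪R x, y⟫| ≤ C_R * ‖x‖ * ‖y‖ := by
    intro x y
    calc |⟪R x, y⟫| ≤ ‖R x‖ * ‖y‖ := abs_real_inner_le_norm _ _
      _ ≤ (C_R * ‖x‖) * ‖y‖ := by
          have h1 : ‖R x‖ ≤ ‖R‖ * ‖x‖ := R.le_opNorm x
          have h2 : ‖R‖ * ‖x‖ ≤ C_R * ‖x‖ :=
            mul_le_mul_of_nonneg_right hR (norm_nonneg x)
          exact mul_le_mul_of_nonneg_right (h1.trans h2) (norm_nonneg y)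
      _ = C_R * ‖x‖ * ‖y‖ := by ring
  -- bound on correctors: ⟪M(e+w), e+w⟫ ≤ C_M ‖e‖²
  have hp : ∀ e w : W, w ∈ V → (∀ v ∈ V, ⟪M (e + w), v⟫ = 0) →
      ⟪M (e + w), e + w⟫ ≤ C_M * ‖e‖ ^ 2 := by
    intro e w hw hw0
    have h1 : ⟪M (e + w), e + w⟫ = ⟪M (e + w), e⟫ := by
      rw [inner_add_right, hw0 w hw, add_zero]
    have h2 := bCS (e + w) e
    have h3 := hMu e
    have hP0 : 0 ≤ ⟪M (e + w), e + w⟫ := le_trans (by positivity) (hMl _)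
    have hB : 0 ≤ C_M * ‖e‖ ^ 2 := by positivity
    rw [h1] at hP0 ⊢
    rw [h1] at h2
    have hMee : 0 ≤ ⟪M e, e⟫ := le_trans (by positivity) (hMl e)
    nlinarith [h2, h3, hP0, hB, hMee]
  have hpi := hp e_i w_i hwiV hwi
  have hpj := hp e_j w_j hwjV hwj
  have hxi2 : α * ‖e_i + w_i‖ ^ 2 ≤ C_M * ‖e_i‖ ^ 2 := le_trans (hMl _) hpi
  have hxj2 : α * ‖e_j + w_j‖ ^ 2 ≤ C_M * ‖e_j‖ ^ 2 := le_trans (hMl _) hpj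
  -- the corrector g_j
  set g : W := (g_j : W) with hgdef
  have hgeq : ⟪M g, g⟫ = -⟪R (e_j + w_j), g⟫ := by
    have := hg (g_j : W) g_j.2
    rw [inner_add_left] at this
    linarith
  have hgRb : ⟪M g, g⟫ ≤ C_R * ‖e_j + w_j‖ * ‖g‖ := by
    rw [hgeq]
    calc -⟪R (e_j + w_j), g⟫ ≤ |⟪R (e_j + w_j), g⟫| := neg_le_abs _
      _ ≤ C_R * ‖e_j + w_j‖ * ‖g‖ := hRMle _ _
  have hgb : α * ‖g‖ ^ 2 ≤ C_R * ‖e_j + w_j‖ * ‖g‖ := le_trans (hMl g) hgRb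
  -- energy decay
  set z : V := (∑' n : ℕ, (((-t) ^ n / n.factorial : ℝ) • ((S ^ n) g_j)) : V) with hz
  have hen : ⟪M (z : W), (z : W)⟫ ≤ ⟪M g, g⟫ := by
    have := exp_energy_decay M R hMsa hRpos V.subtypeL S (fun φ => hS φ φ) g_j t ht
    simpa [hz, hgdef] using this
  have hzb : α * ‖(z : W)‖ ^ 2 ≤ C_R * ‖e_j + w_j‖ * ‖g‖ :=
    le_trans (hMl _) (le_trans hen hgRb)
  -- numeric chain
  have hgn : ‖g‖ ≤ C_R / α * ‖e_j + w_j‖ := by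
    rcases eq_or_lt_of_le (norm_nonneg g) with h | h
    · rw [← h]; positivity
    · have h2 : α * ‖g‖ ≤ C_R * ‖e_j + w_j‖ := by
        nlinarith [hgb, h]
      calc ‖g‖ = α * ‖g‖ / α := by field_simp
        _ ≤ C_R * ‖e_j + w_j‖ / α := by gcongr
        _ = C_R / α * ‖e_j + w_j‖ := by ring
  have hzn : ‖(z : W)‖ ≤ C_R / α * ‖e_j + w_j‖ := by
    refine sq_le_of_sq (norm_nonneg _) (by positivity) ?_
    have h1 : C_R * ‖e_j + w_j‖ * ‖g‖ ≤ C_R * ‖e_j + w_j‖ * (C_R / α * ‖e_j + w_j‖) := by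
      apply mul_le_mul_of_nonneg_left hgn (by positivity)
    have h2 : α * ‖(z : W)‖ ^ 2 ≤ C_R * ‖e_j + w_j‖ * (C_R / α * ‖e_j + w_j‖) :=
      le_trans hzb h1
    have h3 : ‖(z : W)‖ ^ 2 ≤ C_R * ‖e_j + w_j‖ * (C_R / α * ‖e_j + w_j‖) / α := by
      rw [le_div_iff₀ hα]
      nlinarith [h2]
    calc ‖(z : W)‖ ^ 2 ≤ C_R * ‖e_j + w_j‖ * (C_R / α * ‖e_j + w_j‖) / α := h3
      _ = (C_R / α * ‖e_j + w_j‖) ^ 2 := by field_simp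
  have hxprod : ‖e_j + w_j‖ * ‖e_i + w_i‖ ≤ C_M / α * (‖e_j‖ * ‖e_i‖) := by
    refine sq_le_of_sq (by positivity) (by positivity) ?_
    have h1 : ‖e_j + w_j‖ ^ 2 ≤ C_M / α * ‖e_j‖ ^ 2 := by
      rw [div_mul_eq_mul_div, le_div_iff₀ hα]
      nlinarith [hxj2]
    have h2 : ‖e_i + w_i‖ ^ 2 ≤ C_M / α * ‖e_i‖ ^ 2 := by
      rw [div_mul_eq_mul_div, le_div_iff₀ hα]
      nlinarith [hxi2]
    calc (‖e_j + w_j‖ * ‖e_i + w_i‖) ^ 2 = ‖e_j + w_j‖ ^ 2 * ‖e_i + w_i‖ ^ 2 := by ring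
      _ ≤ (C_M / α * ‖e_j‖ ^ 2) * (C_M / α * ‖e_i‖ ^ 2) :=
          mul_le_mul h1 h2 (by positivity) (by positivity)
      _ = (C_M / α * (‖e_j‖ * ‖e_i‖)) ^ 2 := by ring
  have key : |⟪R (z : W), e_i + w_i⟫| ≤ (C_R / α) ^ 2 * C_M * ‖e_j‖ * ‖e_i‖ := by
    calc |⟪R (z : W), e_i + w_i⟫| ≤ C_R * ‖(z : W)‖ * ‖e_i + w_i‖ := hRMle _ _
      _ ≤ C_R * (C_R / α * ‖e_j + w_j‖) * ‖e_i + w_i‖ := by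
          apply mul_le_mul_of_nonneg_right _ (norm_nonneg _)
          exact mul_le_mul_of_nonneg_left hzn hCR.le
      _ = (C_R ^ 2 / α) * (‖e_j + w_j‖ * ‖e_i + w_i‖) := by ring
      _ ≤ (C_R ^ 2 / α) * (C_M / α * (‖e_j‖ * ‖e_i‖)) :=
          mul_le_mul_of_nonneg_left hxprod (by positivity)
      _ = (C_R / α) ^ 2 * C_M * ‖e_j‖ * ‖e_i‖ := by
          field_simp
  have hnn : 0 ≤ (C_R / α) ^ 2 * C_M * ‖e_j‖ * ‖e_i‖ := by positivity
  calc |⟪R (z : W), e_i + w_i⟫| ≤ (C_R / α) ^ 2 * C_M * ‖e_j‖ * ‖e_i‖ := key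
    _ ≤ 4 * (C_R / α) ^ 2 * C_M * ‖e_j‖ * ‖e_i‖ := by nlinarith [hnn]
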